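/- An n×n real matrix A is a balanced 3-cycle matrix if and only if A can be written as the sum of a symmetric matrix and a (finite) linear combination of directed cut matrices. -/

import Mathlib

open Finset

def QAP {n : ℕ} (A B : Matrix (Fin n) (Fin n) ℝ) (π : Equiv.Perm (Fin n)) : ℝ :=
  ∑ i, ∑ j, A (π i) (π j) * B i j

def LAP {n : ℕ} (C : Matrix (Fin n) (Fin n) ℝ) (π : Equiv.Perm (Fin n)) : ℝ :=
  ∑ i, C i (π i)

def Fmat (n : ℕ) : Matrix (Fin n) (Fin n) ℝ := fun i j => if j < i then 1 else 0

def Hmat (n : ℕ) : Matrix (Fin n) (Fin n) ℝ :=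
  fun i j => if (j : ℕ) = ((i : ℕ) + 1) % n then 1 else 0

def DirCut {n : ℕ} (I : Finset (Fin n)) : Matrix (Fin n) (Fin n) ℝ :=
  fun i j => if i ∈ I ∧ j ∉ I then 1 else 0

def Balanced3Cycle {n : ℕ} (A : Matrix (Fin n) (Fin n) ℝ) : Prop :=
  ∀ i j k, A i j + A j k + A k i = A j i + A k j + A i k

def Linearizable {n : ℕ} (A B : Matrix (Fin n) (Fin n) ℝ) : Prop :=
  ∃ C : Matrix (Fin n) (Fin n) ℝ, ∀ π : Equiv.Perm (Fin n), QAP A B π = LAP C π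

lemma cut_balanced {n : ℕ} (I : Finset (Fin n)) (i j k : Fin n) :
    DirCut I i j + DirCut I j k + DirCut I k i
      = DirCut I j i + DirCut I k j + DirCut I i k := by
  unfold DirCut
  by_cases hi : i ∈ I <;> by_cases hj : j ∈ I <;> by_cases hk : k ∈ I <;>
    simp [hi, hj, hk]

theorem stmt4 {n : ℕ} (A : Matrix (Fin n) (Fin n) ℝ) :
    Balanced3Cycle A ↔
    ∃ (S : Matrix (Fin n) (Fin n) ℝ) (_ : S.IsSymm) (m : ℕ)
      (I : Fin m → Finset (Fin n)) (lam : Fin m → ℝ),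
      A = S + ∑ t, lam t • DirCut (I t) := by
  constructor
  · intro hA
    rcases Nat.eq_zero_or_pos n with hn | hn
    · refine ⟨A, ?_, 0, Fin.elim0, Fin.elim0, ?_⟩
      · ext i j
        exact absurd i.isLt (by omega)
      · simp
    · set k0 : Fin n := ⟨0, hn⟩
      set f : Fin n → ℝ := fun i => A i k0 - A k0 i with hf
      have hskew : ∀ i j, A i j - A j i = f i - f j := by
        intro i j
        have := hA i j k0
        simp only [hf]
        linarith
      refine ⟨fun i j => (A i j + A j i) / 2, ?_, n + n,
        Fin.addCases (fun s => {s}) (fun s => {s}ᶜ),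
        Fin.addCases (fun s => f s / 2) (fun s => -(f s / 2)), ?_⟩
      · ext i j
        simp [Matrix.transpose]
        ring
      · ext i j
        erw [Matrix.add_apply, Matrix.sum_apply]
        simp only [Matrix.add_apply, Matrix.sum_apply, Matrix.smul_apply, smul_eq_mul]
        rw [Fin.sum_univ_add]
        simp only [Fin.addCases_left, Fin.addCases_right]
        have h1 : ∀ s : Fin n, DirCut ({s} : Finset (Fin n)) i j
            = if i = s ∧ j ≠ s then 1 else 0 := by
          intro s; simp [DirCut]
        have h2 : ∀ s : Fin n, DirCut ({s}ᶜ : Finset (Fin n)) i j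
            = if i ≠ s ∧ j = s then 1 else 0 := by
          intro s; simp [DirCut]
        by_cases hij : i = j
        · subst hij
          simp [h1, h2]
        · have e1 : ∑ s : Fin n, f s / 2 * DirCut ({s} : Finset (Fin n)) i j = f i / 2 := by
            simp only [h1]
            rw [Finset.sum_eq_single i]
            · simp [hij, Ne.symm hij]
            · intro b _ hb
              simp [Ne.symm hb]
            · simp
          have e2 : ∑ s : Fin n, -(f s / 2) * DirCut ({s}ᶜ : Finset (Fin n)) i j
              = -(f j / 2) := by
            simp only [h2]
            rw [Finset.sum_eq_single j]
            · simp [hij, Ne.symm hij]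
            · intro b _ hb
              simp [Ne.symm hb]
            · simp
          rw [e1, e2]
          linear_combination (hskew i j) / 2
  · rintro ⟨S, hS, m, I, lam, rfl⟩
    intro i j k
    simp only [Matrix.add_apply, Matrix.sum_apply, Matrix.smul_apply, smul_eq_mul]
    have key : ∀ t : Fin m,
        lam t * DirCut (I t) i j + lam t * DirCut (I t) j k + lam t * DirCut (I t) k i
          = lam t * DirCut (I t) j i + lam t * DirCut (I t) k j + lam t * DirCut (I t) i k :=
      fun t => by linear_combination lam t * cut_balanced (I t) i j k
    have hsum : (∑ t, lam t * DirCut (I t) i j) + (∑ t, lam t * DirCut (I t) j k)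
        + (∑ t, lam t * DirCut (I t) k i)
        = (∑ t, lam t * DirCut (I t) j i) + (∑ t, lam t * DirCut (I t) k j)
        + (∑ t, lam t * DirCut (I t) i k) := by
      rw [← Finset.sum_add_distrib, ← Finset.sum_add_distrib, ← Finset.sum_add_distrib,
        ← Finset.sum_add_distrib]
      exact Finset.sum_congr rfl fun t _ => key t
    have h1 := hS.apply i j
    have h2 := hS.apply j k
    have h3 := hS.apply k i
    linarith
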